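/- With D_i the derivation on P_n = F_p[x_1,...,x_n] given by D_i(x_j) = x_j^{p^i}, one has D_i(Q_{n,s}) = (-1)^n [0,1,...,ŝ,...,n-1, i] · L_n^{p-2} for all 0 ≤ s < n and i ≥ 1 (for p = 2 interpret L_n^{p-2} as L_n^{-1}, i.e., the equation L_n·D_i(Q_{n,s}) = [0,...,ŝ,...,n-1,i] holds; for odd p it is a polynomial identity). -/

import Mathlib

open MvPolynomial Matrix Finset

/-- `[e₁,…,eₙ]`: the determinant of the matrix with `(k,j)`-entry `x_j^{p^{e_k}}`. -/
noncomputable def bracket (p n : ℕ) (e : Fin n → ℕ) : MvPolynomial (Fin n) (ZMod p) :=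
  (Matrix.of fun k j : Fin n => (X j : MvPolynomial (Fin n) (ZMod p)) ^ p ^ (e k)).det

/-- `L_n = [0,1,…,n-1]`. -/
noncomputable def Ln (p n : ℕ) : MvPolynomial (Fin n) (ZMod p) :=
  bracket p n (fun k => (k : ℕ))

/-- `L_{n,s} = [0,1,…,ŝ,…,n]` (entry `s` omitted from `0,…,n`). -/
noncomputable def Lns (p n s : ℕ) : MvPolynomial (Fin n) (ZMod p) :=
  bracket p n (fun k => if (k : ℕ) < s then (k : ℕ) else (k : ℕ) + 1)

/-- The `i`-th primitive Steenrod–Milnor operation, as the `F_p`-derivation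
with `D_i(x_j) = x_j^{p^i}`. -/
noncomputable def Dop (p n i : ℕ) :
    Derivation (ZMod p) (MvPolynomial (Fin n) (ZMod p)) (MvPolynomial (Fin n) (ZMod p)) :=
  MvPolynomial.mkDerivation (ZMod p) (fun j : Fin n => (X j) ^ p ^ i)

/-- The action of a matrix `g` on `P_n` by linear substitution of the variables. -/
noncomputable def act (p n : ℕ) (g : Matrix (Fin n) (Fin n) (ZMod p)) :
    MvPolynomial (Fin n) (ZMod p) →ₐ[ZMod p] MvPolynomial (Fin n) (ZMod p) :=
  MvPolynomial.aeval (fun j : Fin n => ∑ k : Fin n, g j k • (X k : MvPolynomial (Fin n) (ZMod p)))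

/-! ### Auxiliary machinery -/

section Aux

/-- The matrix underlying `bracket`. -/
noncomputable def matB (p n : ℕ) (e : Fin n → ℕ) :
    Matrix (Fin n) (Fin n) (MvPolynomial (Fin n) (ZMod p)) :=
  Matrix.of fun k j : Fin n => (X j : MvPolynomial (Fin n) (ZMod p)) ^ p ^ (e k)

lemma bracket_eq_det (p n : ℕ) (e : Fin n → ℕ) : bracket p n e = (matB p n e).det := rfl

lemma matB_apply (p n : ℕ) (e : Fin n → ℕ) (k j : Fin n) :
    matB p n e k j = (X j : MvPolynomial (Fin n) (ZMod p)) ^ p ^ (e k) := rfl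

lemma matB_row (p n : ℕ) (e : Fin n → ℕ) (k : Fin n) :
    matB p n e k = fun j => (X j : MvPolynomial (Fin n) (ZMod p)) ^ p ^ (e k) := rfl

lemma updateRow_matB (p n : ℕ) (e : Fin n → ℕ) (t : Fin n) (m : ℕ) :
    (matB p n e).updateRow t (fun j => (X j : MvPolynomial (Fin n) (ZMod p)) ^ p ^ m)
      = matB p n (Function.update e t m) := by
  funext k j
  by_cases h : k = t
  · subst h; simp [matB, Matrix.updateRow_self, Function.update_self]
  · rw [Matrix.updateRow_ne h]
    show (X j : MvPolynomial (Fin n) (ZMod p)) ^ p ^ (e k) = _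
    rw [matB_apply, Function.update_of_ne h]

lemma bracket_congr (p n : ℕ) {e e' : Fin n → ℕ} (h : ∀ k, e k = e' k) :
    bracket p n e = bracket p n e' := by
  have : e = e' := funext h
  rw [this]

/-- Leibniz rule for a finite product. -/
theorem derivation_prod {R A ι : Type*} [CommRing R] [CommRing A] [Algebra R A] [DecidableEq ι]
    (D : Derivation R A A) (s : Finset ι) (f : ι → A) :
    D (∏ i ∈ s, f i) = ∑ i ∈ s, (∏ j ∈ s.erase i, f j) * D (f i) := by
  classical
  induction s using Finset.induction_on with
  | empty => simp
  | insert a s ha ih =>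
    rw [Finset.prod_insert ha, Derivation.leibniz, smul_eq_mul, smul_eq_mul, ih,
      Finset.sum_insert ha, Finset.erase_insert ha, Finset.mul_sum]
    rw [add_comm]
    congr 1
    refine Finset.sum_congr rfl fun i hi => ?_
    have hia : i ≠ a := by rintro rfl; exact ha hi
    rw [Finset.erase_insert_of_ne hia.symm, Finset.prod_insert (fun h => ha (Finset.mem_of_mem_erase h))]
    ring

/-- The derivative of a determinant. -/
theorem derivation_det {R A : Type*} [CommRing R] [CommRing A] [Algebra R A]
    {m : Type*} [Fintype m] [DecidableEq m]
    (D : Derivation R A A) (M : Matrix m m A) :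
    D M.det = ∑ t, (M.updateRow t fun j => D (M t j)).det := by
  classical
  rw [Matrix.det_apply, map_sum]
  have key : ∀ σ : Equiv.Perm m,
      D (Equiv.Perm.sign σ • ∏ i, M (σ i) i)
        = ∑ t, Equiv.Perm.sign σ •
            ((∏ j ∈ Finset.univ.erase (σ⁻¹ t), M (σ j) j) * D (M (σ (σ⁻¹ t)) (σ⁻¹ t))) := by
    intro σ
    have hsmul : ∀ x : A, D (Equiv.Perm.sign σ • x) = Equiv.Perm.sign σ • D x := by
      intro x
      rw [Units.smul_def, Units.smul_def]
      exact map_zsmul D.toLinearMap _ _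
    rw [hsmul, derivation_prod, Finset.smul_sum]
    rw [← Equiv.sum_comp σ⁻¹
      (fun k => Equiv.Perm.sign σ • ((∏ j ∈ Finset.univ.erase k, M (σ j) j) * D (M (σ k) k)))]
  rw [Finset.sum_congr rfl fun σ _ => key σ, Finset.sum_comm]
  refine Finset.sum_congr rfl fun t _ => ?_
  rw [Matrix.det_apply]
  refine Finset.sum_congr rfl fun σ _ => ?_
  congr 1
  have h1 : ∏ i, (M.updateRow t fun j => D (M t j)) (σ i) i
      = ((M.updateRow t fun j => D (M t j)) (σ (σ⁻¹ t)) (σ⁻¹ t))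
        * ∏ i ∈ Finset.univ.erase (σ⁻¹ t), (M.updateRow t fun j => D (M t j)) (σ i) i :=
    (Finset.mul_prod_erase _ _ (Finset.mem_univ _)).symm
  rw [h1]
  have h2 : (M.updateRow t fun j => D (M t j)) (σ (σ⁻¹ t)) (σ⁻¹ t) = D (M (σ (σ⁻¹ t)) (σ⁻¹ t)) := by
    rw [show σ (σ⁻¹ t) = t from σ.apply_symm_apply t]
    rw [Matrix.updateRow_self]
  have h3 : ∏ i ∈ Finset.univ.erase (σ⁻¹ t), (M.updateRow t fun j => D (M t j)) (σ i) i
      = ∏ i ∈ Finset.univ.erase (σ⁻¹ t), M (σ i) i := by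
    refine Finset.prod_congr rfl fun i hi => ?_
    have : σ i ≠ t := by
      intro h
      exact (Finset.ne_of_mem_erase hi) (by rw [← h]; exact (σ.symm_apply_apply i).symm)
    rw [Matrix.updateRow_ne this]
  rw [h2, h3, mul_comm]

variable (p n : ℕ) [Fact p.Prime]

lemma Dop_pow_zero (i : ℕ) (j : Fin n) :
    Dop p n i ((X j : MvPolynomial (Fin n) (ZMod p)) ^ p ^ 0) = (X j) ^ p ^ i := by
  rw [pow_zero, pow_one]
  exact MvPolynomial.mkDerivation_X _ _ _

lemma Dop_pow_pos (i e : ℕ) (he : 1 ≤ e) (j : Fin n) :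
    Dop p n i ((X j : MvPolynomial (Fin n) (ZMod p)) ^ p ^ e) = 0 := by
  rw [Derivation.leibniz_pow]
  have : ((p ^ e : ℕ) : MvPolynomial (Fin n) (ZMod p)) = 0 := by
    rw [Nat.cast_pow]
    rw [show ((p : ℕ) : MvPolynomial (Fin n) (ZMod p)) = 0 from CharP.cast_eq_zero _ p]
    exact zero_pow (by omega)
  rw [nsmul_eq_mul, this, zero_mul]

lemma Dop_bracket (i : ℕ) (e : Fin n → ℕ) (t₀ : Fin n) (h0 : e t₀ = 0)
    (h1 : ∀ k, k ≠ t₀ → 1 ≤ e k) :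
    Dop p n i (bracket p n e) = bracket p n (Function.update e t₀ i) := by
  rw [bracket_eq_det, derivation_det]
  rw [Finset.sum_eq_single t₀]
  · have hrow : (fun j => Dop p n i (matB p n e t₀ j))
        = fun j => (X j : MvPolynomial (Fin n) (ZMod p)) ^ p ^ i := by
      funext j
      rw [matB_apply, h0, Dop_pow_zero]
    rw [hrow, updateRow_matB, bracket_eq_det]
  · intro t _ ht
    apply Matrix.det_eq_zero_of_row_eq_zero t
    intro j
    rw [Matrix.updateRow_self]
    exact Dop_pow_pos p n i (e t) (h1 t ht) j
  · intro h; exact absurd (Finset.mem_univ t₀) h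

lemma Dop_bracket_zero (i : ℕ) (e : Fin n → ℕ) (h1 : ∀ k, 1 ≤ e k) :
    Dop p n i (bracket p n e) = 0 := by
  rw [bracket_eq_det, derivation_det]
  refine Finset.sum_eq_zero fun t _ => ?_
  apply Matrix.det_eq_zero_of_row_eq_zero t
  intro j
  rw [Matrix.updateRow_self]
  exact Dop_pow_pos p n i (e t) (h1 t) j

lemma bracket_pow_p (e : Fin n → ℕ) :
    bracket p n e ^ p = bracket p n (fun k => e k + 1) := by
  have h := RingHom.map_det (frobenius (MvPolynomial (Fin n) (ZMod p)) p) (matB p n e)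
  rw [bracket_eq_det, bracket_eq_det, ← frobenius_def (p := p), h]
  congr 1
  funext k j
  show frobenius (MvPolynomial (Fin n) (ZMod p)) p ((X j : MvPolynomial (Fin n) (ZMod p)) ^ p ^ (e k))
      = (X j : MvPolynomial (Fin n) (ZMod p)) ^ p ^ (e k + 1)
  rw [frobenius_def, ← pow_mul, ← pow_succ]

lemma bracket_swap (e : Fin n → ℕ) (a b : Fin n) (hab : a ≠ b) :
    bracket p n (fun k => e (Equiv.swap a b k)) = - bracket p n e := by
  have h := Matrix.det_permute (Equiv.swap a b) (matB p n e)
  have hM : (matB p n e).submatrix (Equiv.swap a b) id = matB p n (fun k => e (Equiv.swap a b k)) := by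
    ext k j; rfl
  rw [hM] at h
  rw [bracket_eq_det, bracket_eq_det, h, Equiv.Perm.sign_swap hab]
  simp

/-- Cramer-style row identity. -/
theorem cramer_row_identity {R : Type*} [CommRing R] {m : ℕ}
    (A C : Matrix (Fin m) (Fin m) R) (b : Fin m → R) (t : Fin m) :
    A.det * (C.updateRow t b).det
      = ∑ k, (A.updateRow k b).det * (C.updateRow t (A k)).det := by
  classical
  set L : (Fin m → R) →ₗ[R] R :=
    (Matrix.detRowAlternating (R := R) (n := Fin m)).toMultilinearMap.toLinearMap C t with hLdef
  have hL : ∀ x, L x = (C.updateRow t x).det := fun x => rfl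
  have hv : Aᵀ *ᵥ (Matrix.cramer Aᵀ b) = ∑ k, (Matrix.cramer Aᵀ b k) • A k := by
    funext j
    rw [Finset.sum_apply]
    simp only [Matrix.mulVec, dotProduct, Matrix.transpose_apply, Pi.smul_apply,
      smul_eq_mul]
    exact Finset.sum_congr rfl fun k _ => mul_comm _ _
  have h := congrArg L (Matrix.mulVec_cramer Aᵀ b)
  rw [hv, map_sum] at h
  simp only [_root_.map_smul, smul_eq_mul] at h
  simp only [hL, Matrix.det_transpose, Matrix.cramer_transpose_apply] at h
  exact h.symm

end Aux

section Chains

variable (p n : ℕ) [Fact p.Prime]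

/-- exponent families for moving `i` from slot `s` to the last slot. -/
def E2 (s i m : ℕ) : Fin n → ℕ := fun k =>
  if (k : ℕ) = m then i
  else if (k : ℕ) < m then (if (k : ℕ) < s then (k : ℕ) else (k : ℕ) + 1)
  else (k : ℕ)

lemma chainB (s i : ℕ) : ∀ d, s + d ≤ n - 1 → 1 ≤ n →
    bracket p n (E2 n s i (s + d)) =
      (-1 : MvPolynomial (Fin n) (ZMod p)) ^ d * bracket p n (E2 n s i s) := by
  intro d
  induction d with
  | zero => intro _ _; simp
  | succ d ih =>
    intro hd hn
    have hd' : s + d ≤ n - 1 := by omega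
    have hlt1 : s + d < n := by omega
    have hlt2 : s + d + 1 < n := by omega
    set a : Fin n := ⟨s + d, hlt1⟩
    set b : Fin n := ⟨s + d + 1, hlt2⟩
    have hab : a ≠ b := by
      intro h
      have := congrArg Fin.val h
      simp [a, b] at this
    have hfun : E2 n s i (s + (d + 1)) = fun k => (E2 n s i (s + d)) (Equiv.swap a b k) := by
      funext k
      rcases eq_or_ne k a with rfl | hka
      · rw [Equiv.swap_apply_left]
        show E2 n s i (s + (d+1)) a = E2 n s i (s + d) b
        simp only [E2, a, b]
        split_ifs <;> omega
      · rcases eq_or_ne k b with rfl | hkb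
        · rw [Equiv.swap_apply_right]
          show E2 n s i (s + (d+1)) b = E2 n s i (s + d) a
          simp only [E2, a, b]
          split_ifs <;> omega
        · rw [Equiv.swap_apply_of_ne_of_ne hka hkb]
          have hka' : (k : ℕ) ≠ s + d := fun h => hka (Fin.ext h)
          have hkb' : (k : ℕ) ≠ s + d + 1 := fun h => hkb (Fin.ext h)
          simp only [E2]
          split_ifs <;> omega
    rw [show s + (d + 1) = s + d + 1 from rfl] at *
    rw [hfun, bracket_swap p n _ a b hab, ih hd' hn]
    ring

/-- exponent families for moving the value `s` from slot `m` towards slot `s - 1`,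
with the remaining slots filled by `1,…,n` minus `s` in order. -/
def E1 (s m : ℕ) : Fin n → ℕ := fun k =>
  if (k : ℕ) = m then s
  else if (k : ℕ) < m then (k : ℕ) + 1
  else if (k : ℕ) < s then (k : ℕ) else (k : ℕ) + 1

lemma chainA (s : ℕ) (hs : s ≤ n - 1) (hn : 1 ≤ n) : ∀ m, m ≤ s - 1 →
    bracket p n (E1 n s m) =
      (-1 : MvPolynomial (Fin n) (ZMod p)) ^ m * bracket p n (E1 n s 0) := by
  intro m
  induction m with
  | zero => intro _; simp
  | succ m ih =>
    intro hm
    have hm' : m ≤ s - 1 := by omega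
    have hlt1 : m < n := by omega
    have hlt2 : m + 1 < n := by omega
    set a : Fin n := ⟨m, hlt1⟩
    set b : Fin n := ⟨m + 1, hlt2⟩
    have hab : a ≠ b := by
      intro h
      have := congrArg Fin.val h
      simp [a, b] at this
    have hfun : E1 n s (m + 1) = fun k => (E1 n s m) (Equiv.swap a b k) := by
      funext k
      rcases eq_or_ne k a with rfl | hka
      · rw [Equiv.swap_apply_left]
        show E1 n s (m + 1) a = E1 n s m b
        simp only [E1, a, b]
        split_ifs <;> omega
      · rcases eq_or_ne k b with rfl | hkb
        · rw [Equiv.swap_apply_right]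
          show E1 n s (m + 1) b = E1 n s m a
          simp only [E1, a, b]
          split_ifs <;> omega
        · rw [Equiv.swap_apply_of_ne_of_ne hka hkb]
          have hka' : (k : ℕ) ≠ m := fun h => hka (Fin.ext h)
          have hkb' : (k : ℕ) ≠ m + 1 := fun h => hkb (Fin.ext h)
          simp only [E1]
          split_ifs <;> omega
    rw [hfun, bracket_swap p n _ a b hab, ih hm']
    ring

end Chains

section Nonzero

variable (p n : ℕ) [Fact p.Prime]

lemma prod_X_pow (s : Finset (Fin n)) (d : Fin n → ℕ) :
    (∏ j ∈ s, (X j : MvPolynomial (Fin n) (ZMod p)) ^ d j)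
      = monomial (∑ j ∈ s, Finsupp.single j (d j)) 1 := by
  classical
  induction s using Finset.induction_on with
  | empty => simp
  | insert a t ha ih =>
    rw [Finset.prod_insert ha, Finset.sum_insert ha, ih, X_pow_eq_monomial, monomial_mul, one_mul]

lemma Ln_ne_zero (hn : 1 ≤ n) : Ln p n ≠ 0 := by
  classical
  have hp : p.Prime := Fact.out
  have happ : ∀ (d : Fin n → ℕ) (j' : Fin n),
      (∑ j : Fin n, Finsupp.single j (d j)) j' = d j' := by
    intro d j'
    rw [Finsupp.finset_sum_apply]
    simp [Finsupp.single_apply]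
  have hcoeff : MvPolynomial.coeff (∑ j : Fin n, Finsupp.single j (p ^ (j : ℕ))) (Ln p n)
      = 1 := by
    rw [Ln, bracket_eq_det, Matrix.det_apply, MvPolynomial.coeff_sum]
    have hterm : ∀ σ : Equiv.Perm (Fin n),
        MvPolynomial.coeff (∑ j : Fin n, Finsupp.single j (p ^ (j : ℕ)))
            (Equiv.Perm.sign σ • ∏ i, matB p n (fun k => (k : ℕ)) (σ i) i)
          = if σ = 1 then 1 else 0 := by
      intro σ
      have hprod : (∏ i, matB p n (fun k => (k : ℕ)) (σ i) i)
          = monomial (∑ j : Fin n, Finsupp.single j (p ^ ((σ j : Fin n) : ℕ))) 1 :=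
        prod_X_pow p n Finset.univ (fun j => p ^ ((σ j : Fin n) : ℕ))
      rw [hprod, Units.smul_def, MvPolynomial.coeff_smul, MvPolynomial.coeff_monomial]
      by_cases hσ : σ = 1
      · subst hσ
        rw [if_pos rfl, if_pos (by simp [Equiv.Perm.one_apply])]
        simp
      · rw [if_neg hσ, if_neg, smul_zero]
        intro hcontra
        apply hσ
        ext j
        have h1 := DFunLike.congr_fun hcontra j
        rw [happ (fun x => p ^ ((σ x : Fin n) : ℕ)) j, happ (fun x => p ^ (x : ℕ)) j] at h1
        have h2 := Nat.pow_right_injective hp.two_le h1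
        simpa using h2
    rw [Finset.sum_congr rfl fun σ _ => hterm σ]
    simp
  intro h0
  rw [h0, MvPolynomial.coeff_zero] at hcoeff
  haveI : Fact (1 < p) := ⟨hp.one_lt⟩
  exact one_ne_zero hcoeff.symm

end Nonzero

section Key

variable (p n : ℕ) [Fact p.Prime]

/-- The central bracket identity `Lₙ·D(L_{n,s}) - D(Lₙ)·L_{n,s} = (-1)ⁿ·[0,…,ŝ,…,n-1,i]·Lₙᵖ`. -/
lemma key_identity (hn : 1 ≤ n) (s i : ℕ) (hs : s < n) (hi : 1 ≤ i) :
    Ln p n * Dop p n i (Lns p n s) - Dop p n i (Ln p n) * Lns p n s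
      = (-1 : MvPolynomial (Fin n) (ZMod p)) ^ n *
          bracket p n (fun k =>
            if (k : ℕ) = n - 1 then i else if (k : ℕ) < s then (k : ℕ) else (k : ℕ) + 1) *
          (Ln p n) ^ p := by
  classical
  have t0lt : 0 < n := hn
  set t₀ : Fin n := ⟨0, t0lt⟩ with ht₀
  have hval_t₀ : (t₀ : ℕ) = 0 := rfl
  -- the `L_n` exponents and D(Ln)
  have hDLn : Dop p n i (Ln p n)
      = bracket p n (Function.update (fun k : Fin n => (k : ℕ)) t₀ i) := by
    refine Dop_bracket p n i _ t₀ rfl fun k hk => ?_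
    have : (k : ℕ) ≠ 0 := fun h => hk (Fin.ext h)
    omega
  -- relating the R-bracket to E2-chains
  have hRE2 : bracket p n (fun k =>
        if (k : ℕ) = n - 1 then i else if (k : ℕ) < s then (k : ℕ) else (k : ℕ) + 1)
      = bracket p n (E2 n s i (n - 1)) := by
    refine bracket_congr p n fun k => ?_
    have hk := k.isLt
    simp only [E2]
    split_ifs <;> omega
  have hchainB := chainB p n s i (n - 1 - s) (by omega) hn
  rw [show s + (n - 1 - s) = n - 1 by omega] at hchainB
  -- Lₙᵖ
  have hLnp : Ln p n ^ p = bracket p n (fun k : Fin n => (k : ℕ) + 1) := by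
    rw [Ln, bracket_pow_p]
  rcases Nat.eq_zero_or_pos s with rfl | hs1
  · -- case s = 0
    have hDLns : Dop p n i (Lns p n 0) = 0 := by
      refine Dop_bracket_zero p n i _ fun k => ?_
      show 1 ≤ if (k : ℕ) < 0 then (k : ℕ) else (k : ℕ) + 1
      split_ifs <;> omega
    have hLns0 : Lns p n 0 = Ln p n ^ p := by
      rw [hLnp, Lns]
      exact bracket_congr p n fun k => by split_ifs <;> omega
    have hE20 : Function.update (fun k : Fin n => (k : ℕ)) t₀ i = E2 n 0 i 0 := by
      funext k
      rcases eq_or_ne k t₀ with rfl | hk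
      · rw [Function.update_self]
        simp [E2, hval_t₀]
      · rw [Function.update_of_ne hk]
        have : (k : ℕ) ≠ 0 := fun h => hk (Fin.ext h)
        simp only [E2]
        split_ifs <;> omega
    have hsign : (-1 : MvPolynomial (Fin n) (ZMod p)) ^ n * (-1) ^ (n - 1) = -1 := by
      rw [← pow_add, show n + (n - 1) = 2 * (n - 1) + 1 by omega, pow_succ, pow_mul]
      norm_num
    rw [hDLns, hLns0, hDLn, hE20, hRE2, hchainB]
    rw [show n - 1 - 0 = n - 1 from rfl]
    linear_combination (-(bracket p n (E2 n 0 i 0) * Ln p n ^ p)) * hsign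
  · -- case 1 ≤ s
    set sF : Fin n := ⟨s, hs⟩ with hsF
    have ht₀sF : t₀ ≠ sF := by
      intro h
      have := congrArg Fin.val h
      simp only [ht₀, hsF] at this
      omega
    set eS : Fin n → ℕ := fun k => if (k : ℕ) < s then (k : ℕ) else (k : ℕ) + 1 with heS
    have heSt₀ : eS t₀ = 0 := by
      show (if ((t₀ : Fin n) : ℕ) < s then ((t₀ : Fin n) : ℕ) else ((t₀ : Fin n) : ℕ) + 1) = 0
      rw [hval_t₀, if_pos hs1]
    have hDLns : Dop p n i (Lns p n s) = bracket p n (Function.update eS t₀ i) := by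
      refine Dop_bracket p n i _ t₀ heSt₀ fun k hk => ?_
      have : (k : ℕ) ≠ 0 := fun h => hk (Fin.ext h)
      show 1 ≤ if (k : ℕ) < s then (k : ℕ) else (k : ℕ) + 1
      split_ifs <;> omega
    -- Cramer identity
    have hC := cramer_row_identity (matB p n fun k : Fin n => (k : ℕ)) (matB p n eS)
      (fun j => (X j : MvPolynomial (Fin n) (ZMod p)) ^ p ^ i) t₀
    have hterm1 : ∀ k : Fin n,
        ((matB p n fun k : Fin n => (k : ℕ)).updateRow k
            fun j => (X j : MvPolynomial (Fin n) (ZMod p)) ^ p ^ i).det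
          = bracket p n (Function.update (fun k : Fin n => (k : ℕ)) k i) := by
      intro k
      rw [updateRow_matB, bracket_eq_det]
    have hterm2 : ∀ k : Fin n,
        ((matB p n eS).updateRow t₀ ((matB p n fun k : Fin n => (k : ℕ)) k)).det
          = bracket p n (Function.update eS t₀ (k : ℕ)) := by
      intro k
      rw [matB_row, updateRow_matB, bracket_eq_det]
    rw [updateRow_matB] at hC
    simp only [hterm1, hterm2] at hC
    rw [← bracket_eq_det, ← bracket_eq_det] at hC
    -- hC : Ln * bracket (update eS t₀ i) = ∑ k, bracket (update eL k i) * bracket (update eS t₀ k)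
    have hvanish : ∀ k ∈ (Finset.univ : Finset (Fin n)), k ∉ ({t₀, sF} : Finset (Fin n)) →
        bracket p n (Function.update (fun k : Fin n => (k : ℕ)) k i)
          * bracket p n (Function.update eS t₀ (k : ℕ)) = 0 := by
      intro k _ hk
      simp only [Finset.mem_insert, Finset.mem_singleton] at hk
      push_neg at hk
      have hk0 : (k : ℕ) ≠ 0 := fun h => hk.1 (Fin.ext h)
      have hks : (k : ℕ) ≠ s := fun h => hk.2 (Fin.ext h)
      have hkn := k.isLt
      -- find a duplicate row
      have : bracket p n (Function.update eS t₀ (k : ℕ)) = 0 := by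
        by_cases hlt : (k : ℕ) < s
        · refine Matrix.det_zero_of_row_eq
            (show t₀ ≠ k from fun h => hk0 (congrArg Fin.val h.symm)) ?_
          funext j
          show (X j : MvPolynomial (Fin n) (ZMod p)) ^ p ^ (Function.update eS t₀ (k : ℕ) t₀)
            = (X j) ^ p ^ (Function.update eS t₀ (k : ℕ) k)
          rw [Function.update_self,
            Function.update_of_ne (fun h => hk0 (congrArg Fin.val h))]
          show _ = (X j : MvPolynomial (Fin n) (ZMod p)) ^ p ^ (eS k)
          have : eS k = (k : ℕ) := by
            show (if (k : ℕ) < s then (k : ℕ) else (k : ℕ) + 1) = (k : ℕ)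
            rw [if_pos hlt]
          rw [this]
        · have hsk : s < (k : ℕ) := by omega
          have hm : (k : ℕ) - 1 < n := by omega
          set m : Fin n := ⟨(k : ℕ) - 1, hm⟩ with hmdef
          have hmt₀ : m ≠ t₀ := by
            intro h
            have := congrArg Fin.val h
            simp only [hmdef, ht₀] at this
            omega
          refine Matrix.det_zero_of_row_eq (show t₀ ≠ m from fun h => hmt₀ h.symm) ?_
          funext j
          show (X j : MvPolynomial (Fin n) (ZMod p)) ^ p ^ (Function.update eS t₀ (k : ℕ) t₀)
            = (X j) ^ p ^ (Function.update eS t₀ (k : ℕ) m)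
          rw [Function.update_self, Function.update_of_ne hmt₀]
          have : eS m = (k : ℕ) := by
            show (if ((m : Fin n) : ℕ) < s then ((m : Fin n) : ℕ) else ((m : Fin n) : ℕ) + 1)
              = (k : ℕ)
            have hmval : ((m : Fin n) : ℕ) = (k : ℕ) - 1 := rfl
            rw [hmval, if_neg (by omega)]
            omega
          rw [this]
      rw [this, mul_zero]
    have hsum : (∑ k : Fin n, bracket p n (Function.update (fun k : Fin n => (k : ℕ)) k i)
          * bracket p n (Function.update eS t₀ (k : ℕ)))
        = bracket p n (Function.update (fun k : Fin n => (k : ℕ)) t₀ i)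
            * bracket p n (Function.update eS t₀ ((t₀ : Fin n) : ℕ))
          + bracket p n (Function.update (fun k : Fin n => (k : ℕ)) sF i)
            * bracket p n (Function.update eS t₀ ((sF : Fin n) : ℕ)) := by
      rw [← Finset.sum_subset (Finset.subset_univ ({t₀, sF} : Finset (Fin n))) hvanish]
      rw [Finset.sum_pair ht₀sF]
    rw [hsum] at hC
    have hupdate_t₀ : Function.update eS t₀ ((t₀ : Fin n) : ℕ) = eS := by
      rw [hval_t₀, show (0 : ℕ) = eS t₀ from heSt₀.symm, Function.update_eq_self]
    have hupdate_sF : ((sF : Fin n) : ℕ) = s := rfl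
    rw [hupdate_t₀, hupdate_sF] at hC
    -- identify pieces
    have hLnsdef : Lns p n s = bracket p n eS := rfl
    -- G = bracket (update eS t₀ s) = bracket (E1 n s 0)
    have hG : Function.update eS t₀ s = E1 n s 0 := by
      funext k
      rcases eq_or_ne k t₀ with rfl | hk
      · rw [Function.update_self]
        simp [E1, hval_t₀]
      · rw [Function.update_of_ne hk]
        have hk0 : (k : ℕ) ≠ 0 := fun h => hk (Fin.ext h)
        simp only [heS, E1]
        split_ifs <;> omega
    have hchainA := chainA p n s (by omega) hn (s - 1) le_rfl
    have hE1top : E1 n s (s - 1) = fun k : Fin n => (k : ℕ) + 1 := by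
      funext k
      simp only [E1]
      split_ifs <;> omega
    -- B1 = bracket (update eL sF i) = bracket (E2 n s i s)
    have hB1 : Function.update (fun k : Fin n => (k : ℕ)) sF i = E2 n s i s := by
      funext k
      rcases eq_or_ne k sF with rfl | hk
      · rw [Function.update_self]
        simp [E2, hupdate_sF]
      · rw [Function.update_of_ne hk]
        have hks : (k : ℕ) ≠ s := fun h => hk (Fin.ext h)
        simp only [E2]
        split_ifs <;> omega
    -- put everything together
    rw [hDLns, hDLn, hLnsdef,
      show Ln p n = bracket p n (fun k : Fin n => (k : ℕ)) from rfl]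
    rw [hC]
    have hbp : (bracket p n fun k : Fin n => (k : ℕ)) ^ p = bracket p n (E1 n s (s - 1)) := by
      rw [bracket_pow_p]
      exact bracket_congr p n fun k => by simp [hE1top]
    rw [hB1, hG, hRE2, hchainB, hbp, hchainA]
    have hsign : (-1 : MvPolynomial (Fin n) (ZMod p)) ^ n * ((-1) ^ (n - 1 - s) * (-1) ^ (s - 1))
        = 1 := by
      rw [← pow_add, ← pow_add, show n + (n - 1 - s + (s - 1)) = 2 * (n - 1) by omega, pow_mul]
      norm_num
    linear_combination (-(bracket p n (E2 n s i s) * bracket p n (E1 n s 0))) * hsign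

end Key

theorem stmt6 (p n : ℕ) [Fact p.Prime] (hn : 1 ≤ n)
    (Q : ℕ → MvPolynomial (Fin n) (ZMod p))
    (hQ : ∀ s < n, Lns p n s = Ln p n * Q s)
    (s i : ℕ) (hs : s < n) (hi : 1 ≤ i) :
    Ln p n * Dop p n i (Q s) =
      (-1 : MvPolynomial (Fin n) (ZMod p)) ^ n *
        bracket p n (fun k =>
          if (k : ℕ) = n - 1 then i else if (k : ℕ) < s then (k : ℕ) else (k : ℕ) + 1) *
        (Ln p n) ^ (p - 1) := by
  have hp : p.Prime := Fact.out
  have hLn0 : Ln p n ≠ 0 := Ln_ne_zero p n hn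
  apply mul_left_cancel₀ hLn0
  have hp2 := hp.two_le
  have hpow : Ln p n * Ln p n ^ (p - 1) = Ln p n ^ p := by
    rw [← pow_succ']
    congr 1
    omega
  have hD : Dop p n i (Lns p n s) = Ln p n * Dop p n i (Q s) + Q s * Dop p n i (Ln p n) := by
    rw [hQ s hs, Derivation.leibniz, smul_eq_mul, smul_eq_mul]
  have hmain : Ln p n * (Ln p n * Dop p n i (Q s))
      = Ln p n * Dop p n i (Lns p n s) - Dop p n i (Ln p n) * Lns p n s := by
    rw [hD, hQ s hs]
    ring
  rw [hmain, key_identity p n hn s i hs hi]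
  rw [show Ln p n * ((-1 : MvPolynomial (Fin n) (ZMod p)) ^ n *
        bracket p n (fun k =>
          if (k : ℕ) = n - 1 then i else if (k : ℕ) < s then (k : ℕ) else (k : ℕ) + 1) *
        Ln p n ^ (p - 1))
      = (-1 : MvPolynomial (Fin n) (ZMod p)) ^ n *
        bracket p n (fun k =>
          if (k : ℕ) = n - 1 then i else if (k : ℕ) < s then (k : ℕ) else (k : ℕ) + 1) *
        (Ln p n * Ln p n ^ (p - 1)) by ring]
  rw [hpow]
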